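/- arXiv:1112.1517 — 5 statements merged into one kernel-verified Lean document; each statement's English description precedes it below -/
import Mathlib

section
/- Suppose mutation operator s2 is complementary to s1 on fitness function f, meaning: for every non-optimal state x with P_{s1}(x,x) = ρ_1 := max_y P_{s1}(y,y), it holds that P_{s2}(x,x) < ρ_1. Then the mixed strategy EA defined by q_{s2}(x) = 1 at every x achieving P_{s1}(x,x) = ρ_1 and q_{s1}(x) = 1 otherwise has spectral radius ρ_q = max_x [q_{s1}(x) P_{s1}(x,x) + q_{s2}(x) P_{s2}(x,x)] strictly less than ρ_1; hence its asymptotic convergence rate −ln ρ_q > −ln ρ_1. -/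
/-- If `s2` is complementary to `s1` (every state achieving the maximal `s1`
self-loop probability `ρ₁` has `s2` self-loop probability `< ρ₁`), then the mixed
strategy choosing `s2` exactly on those maximizers and `s1` elsewhere has spectral
radius `ρ_q < ρ₁`; hence (when `ρ_q > 0`) its asymptotic convergence rate
`-ln ρ_q` exceeds `-ln ρ₁`. -/
theorem stmt6 {S : Type*} [Fintype S] [Nonempty S]
    (P1 P2 : S → ℝ)
    (h01 : ∀ x, 0 ≤ P1 x) (h11 : ∀ x, P1 x ≤ 1)
    (h02 : ∀ x, 0 ≤ P2 x) (h12 : ∀ x, P2 x ≤ 1)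
    (ρ1 : ℝ) (hρ1 : ρ1 = Finset.univ.sup' Finset.univ_nonempty P1)
    (hρ1pos : 0 < ρ1)
    (hcomp : ∀ x, P1 x = ρ1 → P2 x < ρ1) :
    Finset.univ.sup' Finset.univ_nonempty
        (fun x => if P1 x = ρ1 then P2 x else P1 x) < ρ1 ∧
      (0 < Finset.univ.sup' Finset.univ_nonempty
          (fun x => if P1 x = ρ1 then P2 x else P1 x) →
        -Real.log ρ1 <
          -Real.log (Finset.univ.sup' Finset.univ_nonempty
            (fun x => if P1 x = ρ1 then P2 x else P1 x))) := by
  have hlt : Finset.univ.sup' Finset.univ_nonempty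
      (fun x => if P1 x = ρ1 then P2 x else P1 x) < ρ1 := by
    rw [Finset.sup'_lt_iff]
    intro x _
    by_cases h : P1 x = ρ1
    · simp [h, hcomp x h]
    · simp only [h, if_false]
      have := Finset.le_sup' P1 (Finset.mem_univ x)
      exact lt_of_le_of_ne (hρ1 ▸ this) h
  refine ⟨hlt, fun hpos => ?_⟩
  have := Real.log_lt_log hpos hlt
  linarith
end

section
/- Under the complementarity hypothesis of the previous statement, if moreover ρ_1 < 1, then the asymptotic hitting time of the constructed mixed strategy EA(s1,s2) satisfies 1/(1 − ρ_q) < 1/(1 − ρ_1), i.e., it is strictly shorter than that of the pure strategy EA(s1). -/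
/-- Under the complementarity hypothesis, if `ρ₁ < 1`, the asymptotic hitting time
of the constructed mixed strategy EA is strictly shorter: `1/(1-ρ_q) < 1/(1-ρ₁)`. -/
theorem stmt7 {S : Type*} [Fintype S] [Nonempty S]
    (P1 P2 : S → ℝ)
    (h01 : ∀ x, 0 ≤ P1 x) (h11 : ∀ x, P1 x ≤ 1)
    (h02 : ∀ x, 0 ≤ P2 x) (h12 : ∀ x, P2 x ≤ 1)
    (ρ1 : ℝ) (hρ1 : ρ1 = Finset.univ.sup' Finset.univ_nonempty P1)
    (hρ1pos : 0 < ρ1) (hρ1lt : ρ1 < 1)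
    (hcomp : ∀ x, P1 x = ρ1 → P2 x < ρ1) :
    1 / (1 - Finset.univ.sup' Finset.univ_nonempty
        (fun x => if P1 x = ρ1 then P2 x else P1 x)) < 1 / (1 - ρ1) := by
  set ρq := Finset.univ.sup' Finset.univ_nonempty
      (fun x => if P1 x = ρ1 then P2 x else P1 x) with hρq
  have hlt : ρq < ρ1 := by
    rw [Finset.sup'_lt_iff]
    intro x _
    by_cases h : P1 x = ρ1
    · simp [h, hcomp x h]
    · simp only [h, if_false]
      have hle : P1 x ≤ ρ1 := hρ1 ▸ Finset.le_sup' P1 (Finset.mem_univ x)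
      exact lt_of_le_of_ne hle h
  have h2 : (0:ℝ) < 1 - ρ1 := by linarith
  rw [div_lt_div_iff₀ (by linarith) h2]
  linarith
end

section
/- Let s1, ..., sκ be mutually complementary mutation operators on f: for every non-optimal x and every index l with P_{sl}(x,x) ≥ ρ_min := min_k ρ_k (where ρ_k = max_y P_{sk}(y,y)), there exists k ≠ l with P_{sk}(x,x) < ρ_min. Then there exists a function σ : S_non → {1,...,κ} (a deterministic state-dependent strategy) such that max_x P_{sσ(x)}(x,x) < ρ_min; consequently the mixed strategy EA using σ has asymptotic convergence rate strictly larger than that of every pure strategy EA: −ln(max_x P_{sσ(x)}(x,x)) > max_k (−ln ρ_k). -/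
/-- If κ mutation operators are mutually complementary, there is a deterministic
state-dependent strategy `σ` whose spectral radius `max_x P_{σ(x)}(x,x)` is below
`ρ_min = min_k ρ_k`; hence (when positive) its asymptotic convergence rate exceeds
that of every pure strategy EA. -/
theorem stmt8 {S : Type*} [Fintype S] [Nonempty S] {κ : ℕ} [NeZero κ]
    (P : Fin κ → S → ℝ)
    (h0 : ∀ k x, 0 ≤ P k x) (h1 : ∀ k x, P k x ≤ 1)
    (hpos : ∀ k, 0 < Finset.univ.sup' Finset.univ_nonempty (P k))
    (ρmin : ℝ)
    (hρmin : ρmin = Finset.univ.inf' Finset.univ_nonempty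
      (fun k => Finset.univ.sup' Finset.univ_nonempty (P k)))
    (hcomp : ∀ x l, ρmin ≤ P l x → ∃ k, k ≠ l ∧ P k x < ρmin) :
    ∃ σ : S → Fin κ,
      Finset.univ.sup' Finset.univ_nonempty (fun x => P (σ x) x) < ρmin ∧
        (0 < Finset.univ.sup' Finset.univ_nonempty (fun x => P (σ x) x) →
          ∀ k, -Real.log (Finset.univ.sup' Finset.univ_nonempty (P k)) <
            -Real.log (Finset.univ.sup' Finset.univ_nonempty (fun x => P (σ x) x))) := by
  have hκ : 0 < κ := Nat.pos_of_ne_zero (NeZero.ne κ)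
  have hchoice : ∀ x : S, ∃ k : Fin κ, P k x < ρmin := by
    intro x
    by_cases h : ∃ l : Fin κ, ρmin ≤ P l x
    · obtain ⟨l, hl⟩ := h
      obtain ⟨k, _, hk⟩ := hcomp x l hl
      exact ⟨k, hk⟩
    · push_neg at h
      exact ⟨⟨0, hκ⟩, h _⟩
  choose σ hσ using hchoice
  refine ⟨σ, ?_, ?_⟩
  · exact (Finset.sup'_lt_iff _).2 fun x _ => hσ x
  · intro hposσ k
    have hsupσ : Finset.univ.sup' Finset.univ_nonempty (fun x => P (σ x) x) < ρmin :=
      (Finset.sup'_lt_iff _).2 fun x _ => hσ x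
    have hρk : ρmin ≤ Finset.univ.sup' Finset.univ_nonempty (P k) := by
      rw [hρmin]
      exact Finset.inf'_le _ (Finset.mem_univ k)
    have := Real.log_lt_log hposσ (lt_of_lt_of_le hsupσ hρk)
    linarith
end

section
/- Under the mutual complementarity hypothesis, if additionally ρ_min = min_k ρ_k < 1, then the asymptotic hitting time of the constructed mixed strategy EA satisfies 1/(1 − ρ_σ) < 1/(1 − ρ_k) for every k, where ρ_σ = max_x P_{sσ(x)}(x,x) < ρ_min ≤ ρ_k. -/
open scoped ENNReal

/-- Asymptotic hitting time of an EA with spectral radius `ρ`: `1/(1-ρ)` if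
`ρ < 1`, and `+∞` if `ρ = 1` (or more). -/
noncomputable def hittingTime (ρ : ℝ) : ℝ≥0∞ :=
  if ρ < 1 then ENNReal.ofReal (1 / (1 - ρ)) else ⊤

/-- Under mutual complementarity with `ρ_min < 1`, the constructed mixed strategy
EA has asymptotic hitting time strictly smaller than that of every pure strategy EA. -/
theorem stmt9 {S : Type*} [Fintype S] [Nonempty S] {κ : ℕ} [NeZero κ]
    (P : Fin κ → S → ℝ)
    (h0 : ∀ k x, 0 ≤ P k x) (h1 : ∀ k x, P k x ≤ 1)
    (hpos : ∀ k, 0 < Finset.univ.sup' Finset.univ_nonempty (P k))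
    (ρmin : ℝ)
    (hρmin : ρmin = Finset.univ.inf' Finset.univ_nonempty
      (fun k => Finset.univ.sup' Finset.univ_nonempty (P k)))
    (hρminlt : ρmin < 1)
    (hcomp : ∀ x l, ρmin ≤ P l x → ∃ k, k ≠ l ∧ P k x < ρmin) :
    ∃ σ : S → Fin κ,
      Finset.univ.sup' Finset.univ_nonempty (fun x => P (σ x) x) < ρmin ∧
        ∀ k, hittingTime (Finset.univ.sup' Finset.univ_nonempty (fun x => P (σ x) x)) <
          hittingTime (Finset.univ.sup' Finset.univ_nonempty (P k)) := by
  have hex : ∀ x : S, ∃ k, P k x < ρmin := by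
    intro x
    by_cases h : ∃ l, ρmin ≤ P l x
    · obtain ⟨l, hl⟩ := h
      obtain ⟨k, _, hk⟩ := hcomp x l hl
      exact ⟨k, hk⟩
    · push_neg at h
      exact ⟨⟨0, Nat.pos_of_ne_zero (NeZero.ne κ)⟩, h _⟩
  choose σ hσ using hex
  refine ⟨σ, ?_, ?_⟩
  · exact (Finset.sup'_lt_iff _).2 fun x _ => hσ x
  · intro k
    have hρσ : Finset.univ.sup' Finset.univ_nonempty (fun x => P (σ x) x) < ρmin :=
      (Finset.sup'_lt_iff _).2 fun x _ => hσ x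
    set ρσ := Finset.univ.sup' Finset.univ_nonempty (fun x => P (σ x) x) with hρσdef
    set ρk := Finset.univ.sup' Finset.univ_nonempty (P k) with hρkdef
    have hmin_le : ρmin ≤ ρk := by
      rw [hρmin]
      exact Finset.inf'_le _ (Finset.mem_univ k)
    have hσlt : ρσ < ρk := lt_of_lt_of_le hρσ hmin_le
    have hσ1 : ρσ < 1 := lt_trans hρσ hρminlt
    rw [hittingTime, hittingTime, if_pos hσ1]
    by_cases hk1 : ρk < 1
    · rw [if_pos hk1]
      have h1σ : 0 < 1 - ρσ := by linarith
      have h1k : 0 < 1 - ρk := by linarith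
      apply ENNReal.ofReal_lt_ofReal_iff_of_nonneg (by positivity) |>.2
      apply one_div_lt_one_div_of_lt h1k
      linarith
    · rw [if_neg hk1]
      exact ENNReal.ofReal_lt_top.trans_le le_top
end

section
/- For the one-bit mutation operator s1 (flip one uniformly random bit) on the fitness function f of Example 3 with strict elitist selection and n ≥ 4 even: every non-optimal state x with |x| < n/2 and |x| odd is a local optimum for s1, i.e., every single-bit flip strictly decreases f, so P_{s1}(x,x) = 1; hence ρ(T_{s1}) = 1 and the asymptotic convergence rate of EA(s1) is R(T_{s1}) = 0. -/
/-- Number of ones of a binary string. -/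
def oneCount {n : ℕ} (x : Fin n → Bool) : ℕ :=
  (Finset.univ.filter fun i => x i = true).card

/-- Flip bit `i` of `x`. -/
def flipOne {n : ℕ} (x : Fin n → Bool) (i : Fin n) : Fin n → Bool :=
  Function.update x i (!x i)

/-- The fitness function of Example 3. -/
def exFitness {n : ℕ} (x : Fin n → Bool) : ℕ :=
  if 2 * oneCount x < n ∧ oneCount x % 2 = 1 then oneCount x + 2 else oneCount x

/-- Self-loop probability of the (1+1) EA with one-bit mutation and strict
elitist selection on fitness `f`. -/
noncomputable def oneBitStayProb {n : ℕ} (f : (Fin n → Bool) → ℕ) (x : Fin n → Bool) : ℝ :=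
  ((Finset.univ.filter fun i : Fin n => f (flipOne x i) ≤ f x).card : ℝ) / n

lemma oneCount_flip_true {n : ℕ} (x : Fin n → Bool) (i : Fin n) (h : x i = true) :
    oneCount (flipOne x i) = oneCount x - 1 := by
  have hset : (Finset.univ.filter fun j => flipOne x i j = true)
      = (Finset.univ.filter fun j => x j = true).erase i := by
    ext j
    by_cases hj : j = i
    · subst hj; simp [flipOne, h]
    · simp only [Finset.mem_filter, Finset.mem_univ, true_and]; simp [flipOne, Function.update_of_ne hj, hj]
  unfold oneCount
  rw [hset, Finset.card_erase_of_mem (by simp [h])]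

lemma oneCount_flip_false {n : ℕ} (x : Fin n → Bool) (i : Fin n) (h : x i = false) :
    oneCount (flipOne x i) = oneCount x + 1 := by
  have hset : (Finset.univ.filter fun j => flipOne x i j = true)
      = insert i (Finset.univ.filter fun j => x j = true) := by
    ext j
    by_cases hj : j = i
    · subst hj; simp [flipOne, h]
    · simp only [Finset.mem_filter, Finset.mem_univ, true_and]; simp [flipOne, Function.update_of_ne hj, hj]
  unfold oneCount
  rw [hset, Finset.card_insert_of_notMem (by simp [h])]

/-- On the fitness of Example 3 with `n ≥ 4` even, every non-optimal state with
`|x| < n/2` and `|x|` odd is a local optimum for one-bit mutation: every single-bit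
flip strictly decreases fitness und the self-loop probability is `1`; hence
`ρ(T_{s1}) = 1` and the asymptotic convergence rate `-ln 1 = 0`. -/
theorem stmt13 (n : ℕ) (hn : 4 ≤ n) (heven : n % 2 = 0) :
    (∀ x : Fin n → Bool, 2 * oneCount x < n → oneCount x % 2 = 1 →
      (∀ i, exFitness (flipOne x i) < exFitness x) ∧ oneBitStayProb exFitness x = 1) ∧
    IsGreatest {p : ℝ | ∃ x : Fin n → Bool, oneCount x < n ∧ p = oneBitStayProb exFitness x}
      1 ∧
    -Real.log 1 = 0 := by
  have hnpos : (0:ℝ) < n := by positivity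
  have key : ∀ x : Fin n → Bool, 2 * oneCount x < n → oneCount x % 2 = 1 →
      (∀ i, exFitness (flipOne x i) < exFitness x) ∧ oneBitStayProb exFitness x = 1 := by
    intro x hlt hodd
    have hfx : exFitness x = oneCount x + 2 := by
      unfold exFitness; rw [if_pos ⟨hlt, hodd⟩]
    have hstep : ∀ i, exFitness (flipOne x i) < exFitness x := by
      intro i
      have hj1 : 1 ≤ oneCount x := by omega
      cases hxi : x i
      · have hc := oneCount_flip_false x i hxi
        have : exFitness (flipOne x i) = oneCount x + 1 := by
          unfold exFitness; rw [hc, if_neg (by omega)]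
        omega
      · have hc := oneCount_flip_true x i hxi
        have : exFitness (flipOne x i) = oneCount x - 1 := by
          unfold exFitness; rw [hc, if_neg (by omega)]
        omega
    refine ⟨hstep, ?_⟩
    have hfilter : (Finset.univ.filter fun i : Fin n =>
        exFitness (flipOne x i) ≤ exFitness x) = Finset.univ := by
      ext i; simp [le_of_lt (hstep i)]
    unfold oneBitStayProb
    rw [hfilter]
    simp [Finset.card_univ]
    omega
  refine ⟨key, ⟨?_, ?_⟩, by simp⟩
  · -- membership: take x with exactly one 1
    haveI : NeZero n := ⟨by omega⟩
    refine ⟨fun j => decide (j = 0), ?_, ?_⟩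
    · have : oneCount (fun j : Fin n => decide (j = 0)) = 1 := by
        unfold oneCount
        rw [show (Finset.univ.filter fun i : Fin n => decide (i = 0) = true)
            = {0} by ext j; simp]
        simp
      omega
    · have h1 : oneCount (fun j : Fin n => decide (j = 0)) = 1 := by
        unfold oneCount
        rw [show (Finset.univ.filter fun i : Fin n => decide (i = 0) = true)
            = {0} by ext j; simp]
        simp
      exact ((key _ (by omega) (by omega)).2).symm
  · -- upper bound
    rintro p ⟨x, _, rfl⟩
    unfold oneBitStayProb
    rw [div_le_one hnpos]
    have := Finset.card_filter_le (Finset.univ : Finset (Fin n))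
      (fun i : Fin n => exFitness (flipOne x i) ≤ exFitness x)
    exact_mod_cast this.trans (by simp)
end
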